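/- In the correlated random game model with parameter p (player A's payoffs i.i.d. uniform on [0,1]; per action profile, independently, U^B = U^A with probability p, else an independent uniform), the expected number of pure Nash equilibria equals p·K^A·K^B/(K^A + K^B - 1) + (1-p). -/

import Mathlib

open MeasureTheory ProbabilityTheory

open scoped ENNReal

noncomputable abbrev mu01 : Measure ℝ := volume.restrict (Set.Icc (0:ℝ) 1)

instance : IsProbabilityMeasure mu01 :=
  ⟨by simp [Measure.restrict_apply_univ, Real.volume_Icc]⟩

lemma mu01_Iic {t : ℝ} (h0 : 0 ≤ t) (h1 : t ≤ 1) :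
    mu01 (Set.Iic t) = ENNReal.ofReal t := by
  rw [Measure.restrict_apply measurableSet_Iic]
  have : Set.Iic t ∩ Set.Icc 0 1 = Set.Icc 0 t := by
    ext x
    simp only [Set.mem_inter_iff, Set.mem_Iic, Set.mem_Icc]
    constructor
    · rintro ⟨hx, hx0, _⟩; exact ⟨hx0, hx⟩
    · rintro ⟨hx0, hx⟩; exact ⟨hx, hx0, hx.trans h1⟩
  rw [this, Real.volume_Icc]; norm_num

lemma mu01_Ioi {t : ℝ} (h0 : 0 ≤ t) (h1 : t ≤ 1) :
    mu01 (Set.Ioi t) = ENNReal.ofReal (1 - t) := by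
  rw [Measure.restrict_apply measurableSet_Ioi]
  have : Set.Ioi t ∩ Set.Icc 0 1 = Set.Ioc t 1 := by
    ext x
    simp only [Set.mem_inter_iff, Set.mem_Ioi, Set.mem_Icc, Set.mem_Ioc]
    constructor
    · rintro ⟨hx, _, hx1⟩; exact ⟨hx, hx1⟩
    · rintro ⟨hx, hx1⟩; exact ⟨hx, h0.trans hx.le, hx1⟩
  rw [this, Real.volume_Ioc]

/-- Core lemma: probabilities of events depending on pairwise disjoint blocks of
an independent family multiply. -/
lemma blocks_inter_prod {Ω ι J : Type*} [MeasurableSpace Ω]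
    {P : Measure Ω} [IsProbabilityMeasure P]
    {f : ι → Ω → ℝ} (hindep : iIndepFun f P)
    (hmeas : ∀ i, Measurable (f i))
    (T : J → Finset ι) (S : Finset J)
    (hdisj : (S : Set J).Pairwise (Function.onFun Disjoint T))
    (s : ∀ j, Set ((i : T j) → ℝ)) (hs : ∀ j ∈ S, MeasurableSet (s j)) :
    P (⋂ j ∈ S, (fun ω (i : T j) => f i ω) ⁻¹' s j)
      = ∏ j ∈ S, P ((fun ω (i : T j) => f i ω) ⁻¹' s j) := by
  classical
  induction S using Finset.induction_on with
  | empty => simp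
  | insert j S hj ih =>
    have hdS : (S : Set J).Pairwise (Function.onFun Disjoint T) :=
      hdisj.mono (fun x hx => Finset.mem_coe.2 (Finset.mem_insert_of_mem (Finset.mem_coe.1 hx)))
    have hsS : ∀ k ∈ S, MeasurableSet (s k) := fun k hk => hs k (Finset.mem_insert_of_mem hk)
    have hd : Disjoint (T j) (S.biUnion T) := by
      rw [Finset.disjoint_biUnion_right]
      intro k hk
      exact hdisj (Finset.mem_insert_self j S) (Finset.mem_insert_of_mem hk)
        (fun h => hj (h ▸ hk))
    have hXY : IndepFun (fun ω (i : T j) => f i ω)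
        (fun ω (i : (S.biUnion T : Finset ι)) => f i ω) P :=
      hindep.indepFun_finset (T j) (S.biUnion T) hd hmeas
    set Y : Ω → ((i : (S.biUnion T : Finset ι)) → ℝ) := fun ω i => f i ω with hY
    -- restriction maps
    set ρ : ∀ k, ((i : (S.biUnion T : Finset ι)) → ℝ) → ((i : T k) → ℝ) :=
      fun k x i => if h : i.1 ∈ S.biUnion T then x ⟨i.1, h⟩ else 0 with hρ
    have hρmeas : ∀ k, Measurable (ρ k) := by
      intro k
      refine measurable_pi_lambda _ fun i => ?_
      by_cases h : i.1 ∈ S.biUnion T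
      · simp only [hρ, dif_pos h]
        exact measurable_pi_apply _
      · simp only [hρ, dif_neg h]
        exact measurable_const
    set D : Set ((i : (S.biUnion T : Finset ι)) → ℝ) :=
      ⋂ k ∈ (S : Set J), ρ k ⁻¹' s k with hD
    have hDmeas : MeasurableSet D := by
      refine MeasurableSet.biInter S.countable_toSet fun k hk => ?_
      exact hρmeas k (hsS k (Finset.mem_coe.1 hk))
    have hDrep : (⋂ k ∈ S, (fun ω (i : T k) => f i ω) ⁻¹' s k) = Y ⁻¹' D := by
      ext ω
      simp only [Set.mem_iInter, Set.mem_preimage, hD, hY, Finset.mem_coe]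
      refine forall_congr' fun k => ?_
      refine forall_congr' fun hk => ?_
      have : (fun i : T k => f i ω) = ρ k (fun i : (S.biUnion T : Finset ι) => f i ω) := by
        funext i
        have hmem : (i : ι) ∈ S.biUnion T := Finset.mem_biUnion.2 ⟨k, hk, i.2⟩
        simp only [hρ, dif_pos hmem]
      rw [this]
    rw [Finset.set_biInter_insert, Finset.prod_insert hj, hDrep,
      hXY.meas_inter ⟨s j, hs j (Finset.mem_insert_self j S), rfl⟩ ⟨D, hDmeas, rfl⟩,
      ← hDrep, ih hdS hsS]
lemma iIndepFun_blocks {Ω ι J : Type*} [MeasurableSpace Ω]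
    {P : Measure Ω} [IsProbabilityMeasure P]
    {f : ι → Ω → ℝ} (hindep : iIndepFun f P)
    (hmeas : ∀ i, Measurable (f i))
    (T : J → Finset ι) (hdisj : Pairwise (Function.onFun Disjoint T))
    (g : ∀ j, ((i : T j) → ℝ) → ℝ) (hg : ∀ j, Measurable (g j))
    (V : J → Ω → ℝ) (hV : ∀ j ω, V j ω = g j (fun i => f i ω)) :
    iIndepFun V P := by
  rw [iIndepFun_iff_measure_inter_preimage_eq_mul]
  intro S sets hsets
  have hrep : ∀ j, V j ⁻¹' sets j
      = (fun ω (i : T j) => f i ω) ⁻¹' (g j ⁻¹' sets j) := by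
    intro j; ext ω; simp [hV]
  calc P (⋂ j ∈ S, V j ⁻¹' sets j)
      = P (⋂ j ∈ S, (fun ω (i : T j) => f i ω) ⁻¹' (g j ⁻¹' sets j)) := by
        simp_rw [hrep]
    _ = ∏ j ∈ S, P ((fun ω (i : T j) => f i ω) ⁻¹' (g j ⁻¹' sets j)) :=
        blocks_inter_prod hindep hmeas T S (hdisj.set_pairwise _) _
          (fun j hj => (hg j) (hsets j hj))
    _ = ∏ j ∈ S, P (V j ⁻¹' sets j) := by simp_rw [hrep]

lemma joint_map_eq_pi {Ω J : Type*} [MeasurableSpace Ω] [Fintype J]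
    {P : Measure Ω} [IsProbabilityMeasure P]
    {V : J → Ω → ℝ} (hmeas : ∀ j, Measurable (V j))
    (hindep : iIndepFun V P)
    (μ : J → Measure ℝ) [∀ j, IsProbabilityMeasure (μ j)]
    (hlaw : ∀ j, P.map (V j) = μ j) :
    P.map (fun ω j => V j ω) = Measure.pi μ := by
  refine (Measure.pi_eq fun B hB => ?_).symm
  rw [Measure.map_apply (measurable_pi_lambda _ hmeas) (MeasurableSet.univ_pi hB)]
  have h1 : (fun ω j => V j ω) ⁻¹' Set.pi Set.univ B = ⋂ j, V j ⁻¹' B j := by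
    ext ω; simp [Set.mem_pi]
  rw [h1, hindep.meas_iInter (s := fun j => V j ⁻¹' B j) (fun j => ⟨B j, hB j, rfl⟩)]
  refine Finset.prod_congr rfl fun j _ => ?_
  rw [← hlaw j, Measure.map_apply (hmeas j) (hB j)]

lemma pi_max {J : Type*} [Fintype J] (j0 : J) :
    Measure.pi (fun _ : J => mu01) {x | ∀ j, x j ≤ x j0}
      = (Fintype.card J : ℝ≥0∞)⁻¹ := by
  classical
  obtain ⟨m, hm⟩ : ∃ m, Fintype.card J = m + 1 :=
    ⟨Fintype.card J - 1, (Nat.succ_pred_eq_of_pos (Fintype.card_pos_iff.2 ⟨j0⟩)).symm⟩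
  obtain ⟨q⟩ : Nonempty (J ≃ Fin (m + 1)) := ⟨Fintype.equivFinOfCardEq hm⟩
  set e : Fin (m + 1) ≃ J := (Equiv.swap 0 (q j0)).trans q.symm with he
  have he0 : e 0 = j0 := by simp [he, Equiv.swap_apply_left]
  have hSmeas : MeasurableSet {x : J → ℝ | ∀ j, x j ≤ x j0} := by
    have : {x : J → ℝ | ∀ j, x j ≤ x j0} = ⋂ j, {x : J → ℝ | x j ≤ x j0} := by
      ext x; simp
    rw [this]
    exact MeasurableSet.iInter fun j =>
      measurableSet_le (measurable_pi_apply j) (measurable_pi_apply j0)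
  have MP1 := measurePreserving_piCongrLeft (fun _ : J => mu01) e
  rw [← MP1.measure_preimage hSmeas.nullMeasurableSet]
  have happ : ∀ (y : Fin (m + 1) → ℝ) (i : Fin (m + 1)),
      (MeasurableEquiv.piCongrLeft (fun _ => ℝ) e) y (e i) = y i := fun y i => by
    rw [MeasurableEquiv.coe_piCongrLeft, Equiv.piCongrLeft_apply_apply]
  have h2 : (⇑(MeasurableEquiv.piCongrLeft (fun _ => ℝ) e)) ⁻¹' {x | ∀ j, x j ≤ x j0}
      = {y : Fin (m + 1) → ℝ | ∀ i, y i ≤ y 0} := by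
    ext y
    simp only [Set.mem_preimage, Set.mem_setOf_eq]
    constructor
    · intro h i
      have := h (e i)
      rwa [happ, ← he0, happ] at this
    · intro h j
      obtain ⟨i, rfl⟩ := e.surjective j
      rw [happ, ← he0, happ]
      exact h i
  rw [h2]
  -- split off coordinate 0
  have MP2 := measurePreserving_piFinSuccAbove (fun _ : Fin (m + 1) => mu01) 0
  set A : Set (ℝ × (Fin m → ℝ)) := {z | ∀ i, z.2 i ≤ z.1} with hA
  have hAmeas : MeasurableSet A := by
    have : A = ⋂ i, {z : ℝ × (Fin m → ℝ) | z.2 i ≤ z.1} := by ext z; simp [hA]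
    rw [this]
    exact MeasurableSet.iInter fun i =>
      measurableSet_le
        (((measurable_pi_apply i).comp measurable_snd :
          Measurable fun z : ℝ × (Fin m → ℝ) => z.2 i)) measurable_fst
  have h3 : {y : Fin (m + 1) → ℝ | ∀ i, y i ≤ y 0}
      = (⇑(MeasurableEquiv.piFinSuccAbove (fun _ => ℝ) 0)) ⁻¹' A := by
    ext y
    simp only [Set.mem_preimage, Set.mem_setOf_eq, hA,
      MeasurableEquiv.piFinSuccAbove, MeasurableEquiv.coe_mk,
      Fin.insertNthEquiv_symm_apply, Fin.removeNth, Fin.zero_succAbove]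
    constructor
    · intro h i
      exact h _
    · intro h i
      induction i using Fin.cases with
      | zero => exact le_rfl
      | succ i => exact h i
  rw [h3, MP2.measure_preimage hAmeas.nullMeasurableSet]
  rw [Measure.prod_apply hAmeas]
  have h4 : ∀ t : ℝ, (Prod.mk t ⁻¹' A) = Set.pi Set.univ (fun _ : Fin m => Set.Iic t) := by
    intro t; ext z; simp [hA, Set.mem_pi, Pi.le_def]
  have h5 : ∀ t : ℝ, (Measure.pi fun _ : Fin m => mu01) (Prod.mk t ⁻¹' A)
      = mu01 (Set.Iic t) ^ m := by
    intro t
    rw [h4 t, Measure.pi_pi]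
    simp
  simp_rw [h5]
  have h6 : ∫⁻ t, mu01 (Set.Iic t) ^ m ∂mu01
      = ∫⁻ t in Set.Icc (0:ℝ) 1, ENNReal.ofReal (t ^ m) ∂volume := by
    refine setLIntegral_congr_fun measurableSet_Icc ?_
    intro t ht
    dsimp only
    rw [mu01_Iic ht.1 ht.2, ← ENNReal.ofReal_pow ht.1]
  rw [h6]
  have hInt : IntegrableOn (fun t : ℝ => t ^ m) (Set.Icc (0:ℝ) 1) volume :=
    (continuous_pow m).integrableOn_Icc
  have hnn : 0 ≤ᶠ[ae (volume.restrict (Set.Icc (0:ℝ) 1))] fun t : ℝ => t ^ m := by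
    filter_upwards [ae_restrict_mem measurableSet_Icc] with t ht
    exact pow_nonneg ht.1 m
  rw [← ofReal_integral_eq_lintegral_ofReal hInt hnn]
  have h7 : ∫ t in Set.Icc (0:ℝ) 1, t ^ m = 1 / (m + 1 : ℝ) := by
    rw [integral_Icc_eq_integral_Ioc, ← intervalIntegral.integral_of_le zero_le_one,
      integral_pow]
    norm_num
  rw [h7, hm, one_div, ENNReal.ofReal_inv_of_pos (by positivity)]
  congr 1
  rw [show ((m : ℝ) + 1) = ((m + 1 : ℕ) : ℝ) by push_cast; ring, ENNReal.ofReal_natCast]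

lemma max_prob {Ω J : Type*} [MeasurableSpace Ω] [Fintype J]
    {P : Measure Ω} [IsProbabilityMeasure P]
    {V : J → Ω → ℝ} (hmeas : ∀ j, Measurable (V j))
    (hindep : iIndepFun V P)
    (hlaw : ∀ j, P.map (V j) = mu01) (j0 : J) :
    P {ω | ∀ j, V j ω ≤ V j0 ω} = (Fintype.card J : ℝ≥0∞)⁻¹ := by
  have hjoint := joint_map_eq_pi hmeas hindep (fun _ => mu01) hlaw
  have hSmeas : MeasurableSet {x : J → ℝ | ∀ j, x j ≤ x j0} := by
    have : {x : J → ℝ | ∀ j, x j ≤ x j0} = ⋂ j, {x : J → ℝ | x j ≤ x j0} := by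
      ext x; simp
    rw [this]
    exact MeasurableSet.iInter fun j =>
      measurableSet_le (measurable_pi_apply j) (measurable_pi_apply j0)
  have h1 : {ω | ∀ j, V j ω ≤ V j0 ω}
      = (fun ω j => V j ω) ⁻¹' {x | ∀ j, x j ≤ x j0} := rfl
  rw [h1, ← Measure.map_apply (measurable_pi_lambda _ hmeas) hSmeas, hjoint, pi_max]
lemma indep_two_families {Ω ι J J' : Type*} [MeasurableSpace Ω] [Fintype J] [Fintype J']
    {P : Measure Ω} [IsProbabilityMeasure P]
    {f : ι → Ω → ℝ} (hindep : iIndepFun f P)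
    (hmeas : ∀ i, Measurable (f i))
    (T : J → Finset ι) (T' : J' → Finset ι)
    (hdisj : ∀ (j : J) (k : J'), Disjoint (T j) (T' k))
    (g : ∀ j, ((i : T j) → ℝ) → ℝ) (hg : ∀ j, Measurable (g j))
    (g' : ∀ j, ((i : T' j) → ℝ) → ℝ) (hg' : ∀ j, Measurable (g' j))
    (V : J → Ω → ℝ) (hV : ∀ j ω, V j ω = g j fun i => f i ω)
    (V' : J' → Ω → ℝ) (hV' : ∀ j ω, V' j ω = g' j fun i => f i ω)
    (SA : Set (J → ℝ)) (hSA : MeasurableSet SA)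
    (SB : Set (J' → ℝ)) (hSB : MeasurableSet SB) :
    P ((fun ω j => V j ω) ⁻¹' SA ∩ (fun ω j => V' j ω) ⁻¹' SB)
      = P ((fun ω j => V j ω) ⁻¹' SA) * P ((fun ω j => V' j ω) ⁻¹' SB) := by
  classical
  set UA := Finset.univ.biUnion T with hUA
  set UB := Finset.univ.biUnion T' with hUB
  have hd : Disjoint UA UB := by
    rw [hUA, Finset.disjoint_biUnion_left]
    intro j _
    rw [hUB, Finset.disjoint_biUnion_right]
    intro k _
    exact hdisj j k
  have hXY := hindep.indepFun_finset UA UB hd hmeas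
  set ΦA : ((i : UA) → ℝ) → (J → ℝ) := fun x j =>
    g j (fun i => x ⟨i.1, Finset.mem_biUnion.2 ⟨j, Finset.mem_univ j, i.2⟩⟩) with hΦA
  set ΦB : ((i : UB) → ℝ) → (J' → ℝ) := fun x j =>
    g' j (fun i => x ⟨i.1, Finset.mem_biUnion.2 ⟨j, Finset.mem_univ j, i.2⟩⟩) with hΦB
  have hΦAm : Measurable ΦA := measurable_pi_lambda _ fun j =>
    (hg j).comp (measurable_pi_lambda _ fun i => measurable_pi_apply _)
  have hΦBm : Measurable ΦB := measurable_pi_lambda _ fun j =>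
    (hg' j).comp (measurable_pi_lambda _ fun i => measurable_pi_apply _)
  have hArep : (fun ω (j : J) => V j ω)
      = fun ω => ΦA (fun i : UA => f i ω) := by
    funext ω j; rw [hV]
  have hBrep : (fun ω (j : J') => V' j ω)
      = fun ω => ΦB (fun i : UB => f i ω) := by
    funext ω j; rw [hV']
  rw [hArep, hBrep]
  exact hXY.meas_inter ⟨ΦA ⁻¹' SA, hΦAm hSA, rfl⟩ ⟨ΦB ⁻¹' SB, hΦBm hSB, rfl⟩

lemma mixture_law {Ω ι : Type*} [MeasurableSpace Ω] {P : Measure Ω} [IsProbabilityMeasure P]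
    {f : ι → Ω → ℝ} (hindep : iIndepFun f P)
    (hmeas : ∀ i, Measurable (f i))
    (hunif : ∀ i, P.map (f i) = mu01)
    {p : ℝ} (hp0 : 0 ≤ p) (hp1 : p ≤ 1)
    {i0 i1 i2 : ι} (h10 : i1 ≠ i0) (h12 : i1 ≠ i2) :
    P.map (fun ω => if f i1 ω ≤ p then f i0 ω else f i2 ω) = mu01 := by
  have hg : Measurable (fun ω => if f i1 ω ≤ p then f i0 ω else f i2 ω) :=
    Measurable.ite (measurableSet_le (hmeas i1) measurable_const) (hmeas i0) (hmeas i2)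
  refine Measure.ext fun B hB => ?_
  rw [Measure.map_apply hg hB]
  have hsplit : (fun ω => if f i1 ω ≤ p then f i0 ω else f i2 ω) ⁻¹' B
      = (f i1 ⁻¹' Set.Iic p ∩ f i0 ⁻¹' B) ∪ (f i1 ⁻¹' Set.Ioi p ∩ f i2 ⁻¹' B) := by
    ext ω
    by_cases h : f i1 ω ≤ p
    · simp [h, not_lt.2 h]
    · simp [h, not_le.1 h]
  have hd : Disjoint (f i1 ⁻¹' Set.Iic p ∩ f i0 ⁻¹' B)
      (f i1 ⁻¹' Set.Ioi p ∩ f i2 ⁻¹' B) := by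
    refine Disjoint.mono Set.inter_subset_left Set.inter_subset_left ?_
    exact (Set.Iic_disjoint_Ioi le_rfl).preimage (f i1)
  rw [hsplit, measure_union hd (((hmeas i1) measurableSet_Ioi).inter ((hmeas i2) hB))]
  have law : ∀ (i : ι) (s : Set ℝ), MeasurableSet s → P (f i ⁻¹' s) = mu01 s := by
    intro i s hs
    rw [← Measure.map_apply (hmeas i) hs, hunif i]
  rw [(hindep.indepFun h10).meas_inter ⟨Set.Iic p, measurableSet_Iic, rfl⟩ ⟨B, hB, rfl⟩,
    (hindep.indepFun h12).meas_inter ⟨Set.Ioi p, measurableSet_Ioi, rfl⟩ ⟨B, hB, rfl⟩,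
    law i1 _ measurableSet_Iic, law i1 _ measurableSet_Ioi, law i0 _ hB, law i2 _ hB,
    mu01_Iic hp0 hp1, mu01_Ioi hp0 hp1, ← add_mul,
    ← ENNReal.ofReal_add hp0 (by linarith), show p + (1 - p) = 1 by ring,
    ENNReal.ofReal_one, one_mul]
section cell
variable {KA m : ℕ}

abbrev ιf (KA m : ℕ) := Fin 3 × Fin KA × Fin (m+1)

def tri (a : Fin KA) (c : Fin (m+1)) : Finset (ιf KA m) := {(0,a,c),(1,a,c),(2,a,c)}

lemma mem_tri0 (a : Fin KA) (c : Fin (m+1)) : ((0:Fin 3),a,c) ∈ tri a c := by simp [tri]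
lemma mem_tri1 (a : Fin KA) (c : Fin (m+1)) : ((1:Fin 3),a,c) ∈ tri a c := by simp [tri]
lemma mem_tri2 (a : Fin KA) (c : Fin (m+1)) : ((2:Fin 3),a,c) ∈ tri a c := by simp [tri]

lemma snd_of_mem_tri {a : Fin KA} {c : Fin (m+1)} {x : ιf KA m} (h : x ∈ tri a c) :
    x.2 = (a, c) := by
  simp only [tri, Finset.mem_insert, Finset.mem_singleton] at h
  rcases h with rfl | rfl | rfl <;> rfl

noncomputable def gmix (a : Fin KA) (c : Fin (m+1)) (p : ℝ) : ((i : tri a c) → ℝ) → ℝ := fun x =>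
  if x ⟨(1,a,c), mem_tri1 a c⟩ ≤ p then x ⟨(0,a,c), mem_tri0 a c⟩
  else x ⟨(2,a,c), mem_tri2 a c⟩

lemma gmix_meas (a : Fin KA) (c : Fin (m+1)) (p : ℝ) : Measurable (gmix a c p) :=
  Measurable.ite (measurableSet_le (measurable_pi_apply _) measurable_const)
    (measurable_pi_apply _) (measurable_pi_apply _)

def sing (x : ιf KA m) : Finset (ιf KA m) := {x}

def gsing (x : ιf KA m) : ((i : sing x) → ℝ) → ℝ := fun y => y ⟨x, by simp [sing]⟩

lemma gsing_meas (x : ιf KA m) : Measurable (gsing x) := measurable_pi_apply _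

lemma sing_disj_tri {a : Fin KA} {c : Fin (m+1)} {x : ιf KA m} (h : x.2 ≠ (a,c)) :
    Disjoint (sing x) (tri a c) := by
  rw [Finset.disjoint_left]
  rintro y hy hy'
  rw [sing, Finset.mem_singleton] at hy
  subst hy
  exact h (snd_of_mem_tri hy')

lemma tri_disj_tri {a : Fin KA} {c c' : Fin (m+1)} (h : c ≠ c') :
    Disjoint (tri a c) (tri (m := m) a c') := by
  rw [Finset.disjoint_left]
  intro y hy hy'
  have h1 := snd_of_mem_tri hy
  have h2 := snd_of_mem_tri hy'
  rw [h1] at h2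
  exact h (by simpa using congrArg Prod.snd h2)

lemma sing_disj_sing {x y : ιf KA m} (h : x ≠ y) : Disjoint (sing x) (sing y) :=
  Finset.disjoint_singleton.2 h

variable (a : Fin KA) (b : Fin (m+1)) (p : ℝ)

def T1 : Fin KA ⊕ Fin m → Finset (ιf KA m) :=
  Sum.elim (fun a' => sing (0,a',b)) (fun jj => tri a (b.succAbove jj))

noncomputable def g1 : ∀ j, ((i : T1 a b j) → ℝ) → ℝ
  | .inl a' => gsing (0,a',b)
  | .inr jj => gmix a (b.succAbove jj) p

def T2 : Unit ⊕ Fin m → Finset (ιf KA m) :=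
  Sum.elim (fun _ => sing (2,a,b)) (fun jj => tri a (b.succAbove jj))

noncomputable def g2 : ∀ j, ((i : T2 a b j) → ℝ) → ℝ
  | .inl _ => gsing (2,a,b)
  | .inr jj => gmix a (b.succAbove jj) p

def T3 : Fin KA → Finset (ιf KA m) := fun a' => sing (0,a',b)

def g3 : ∀ j : Fin KA, ((i : T3 (KA := KA) (m := m) b j) → ℝ) → ℝ := fun a' => gsing (0,a',b)

def TCc : Unit → Finset (ιf KA m) := fun _ => sing (1,a,b)

def gCc : ∀ j, ((i : TCc a b j) → ℝ) → ℝ := fun _ => gsing (1,a,b)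

def T23 : Fin KA ⊕ (Unit ⊕ Fin m) → Finset (ιf KA m) := Sum.elim (T3 b) (T2 a b)

noncomputable def g23 : ∀ j, ((i : T23 a b j) → ℝ) → ℝ
  | .inl a' => g3 b a'
  | .inr j2 => g2 a b p j2

variable {Ω : Type*} [MeasurableSpace Ω] (f : ιf KA m → Ω → ℝ)

noncomputable def V1 : Fin KA ⊕ Fin m → Ω → ℝ := fun j ω => g1 a b p j (fun i => f i ω)
noncomputable def V2 : Unit ⊕ Fin m → Ω → ℝ := fun j ω => g2 a b p j (fun i => f i ω)
def V3 : Fin KA → Ω → ℝ := fun a' ω => g3 b a' (fun i => f i ω)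
def VCc : Unit → Ω → ℝ := fun u ω => gCc a b u (fun i => f i ω)
noncomputable def V23 : Fin KA ⊕ (Unit ⊕ Fin m) → Ω → ℝ := fun j ω => g23 a b p j (fun i => f i ω)

example (a' : Fin KA) : V1 a b p f (.inl a') = f (0,a',b) := rfl
example (jj : Fin m) : V1 a b p f (.inr jj) = fun ω =>
    if f (1,a,b.succAbove jj) ω ≤ p then f (0,a,b.succAbove jj) ω
    else f (2,a,b.succAbove jj) ω := rfl
example : V2 a b p f (.inl ()) = f (2,a,b) := rfl
example (jj : Fin m) : V2 a b p f (.inr jj) = V1 a b p f (.inr jj) := rfl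
example (a' : Fin KA) : V3 b f a' = f (0,a',b) := rfl
example : VCc a b f () = f (1,a,b) := rfl
example (a' : Fin KA) : V23 a b p f (.inl a') = V3 b f a' := rfl
example (j2 : Unit ⊕ Fin m) : V23 a b p f (.inr j2) = V2 a b p f j2 := rfl

end cell
lemma measurableSet_pivot {J : Type*} [Countable J] (j0 : J) :
    MeasurableSet {x : J → ℝ | ∀ j, x j ≤ x j0} := by
  have : {x : J → ℝ | ∀ j, x j ≤ x j0} = ⋂ j, {x : J → ℝ | x j ≤ x j0} := by ext x; simp
  rw [this]
  exact MeasurableSet.iInter fun j =>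
    measurableSet_le (measurable_pi_apply _) (measurable_pi_apply _)

lemma prob_cell {Ω : Type*} [MeasurableSpace Ω] (P : Measure Ω) [IsProbabilityMeasure P]
    {KA m : ℕ} (p : ℝ) (hp : p ∈ Set.Icc (0:ℝ) 1)
    (f : ιf KA m → Ω → ℝ)
    (hmeas : ∀ i, Measurable (f i))
    (hindep : iIndepFun f P)
    (hunif : ∀ i, P.map (f i) = mu01)
    (a : Fin KA) (b : Fin (m+1)) :
    P {ω | (∀ a', f (0,a',b) ω ≤ f (0,a,b) ω) ∧
        (∀ b', (if f (1,a,b') ω ≤ p then f (0,a,b') ω else f (2,a,b') ω)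
             ≤ (if f (1,a,b) ω ≤ p then f (0,a,b) ω else f (2,a,b) ω))}
      = ENNReal.ofReal p * ((KA + m : ℕ) : ℝ≥0∞)⁻¹
        + ENNReal.ofReal (1-p) * (((KA : ℕ) : ℝ≥0∞)⁻¹ * (((1 + m : ℕ) : ℝ≥0∞))⁻¹) := by
  classical
  set E := {ω | (∀ a', f (0,a',b) ω ≤ f (0,a,b) ω) ∧
        (∀ b', (if f (1,a,b') ω ≤ p then f (0,a,b') ω else f (2,a,b') ω)
             ≤ (if f (1,a,b) ω ≤ p then f (0,a,b) ω else f (2,a,b) ω))} with hE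
  -- measurability of g's
  have hg1 : ∀ j, Measurable (g1 a b p j) := by
    rintro (a' | jj)
    · exact gsing_meas _
    · exact gmix_meas _ _ _
  have hg2 : ∀ j, Measurable (g2 a b p j) := by
    rintro (u | jj)
    · exact gsing_meas _
    · exact gmix_meas _ _ _
  have hg3 : ∀ j, Measurable (g3 (KA := KA) (m := m) b j) := fun _ => gsing_meas _
  have hgC : ∀ j, Measurable (gCc a b j) := fun _ => gsing_meas _
  have hg23 : ∀ j, Measurable (g23 a b p j) := by
    rintro (a' | j2)
    · exact gsing_meas _
    · exact hg2 j2
  -- disjointness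
  have hbne : ∀ jj : Fin m, b.succAbove jj ≠ b := fun jj => Fin.succAbove_ne b jj
  have hdisj1 : Pairwise (Function.onFun Disjoint (T1 a b)) := by
    rintro (a₁ | j₁) (a₂ | j₂) hne
    · exact sing_disj_sing fun h => hne (congrArg Sum.inl (congrArg (fun x : ιf KA m => x.2.1) h))
    · exact sing_disj_tri fun h => hbne j₂ ((congrArg Prod.snd h).symm)
    · exact (sing_disj_tri (x := ((0:Fin 3),a₂,b)) (a := a) (c := b.succAbove j₁)
        (fun h => hbne j₁ ((congrArg Prod.snd h).symm))).symm
    · exact tri_disj_tri fun h => hne (congrArg Sum.inr (Fin.succAbove_right_injective h))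
  have hdisj2 : Pairwise (Function.onFun Disjoint (T2 a b)) := by
    rintro (u₁ | j₁) (u₂ | j₂) hne
    · exact (hne rfl).elim
    · exact sing_disj_tri fun h => hbne j₂ ((congrArg Prod.snd h).symm)
    · exact (sing_disj_tri (x := ((2:Fin 3),a,b)) (a := a) (c := b.succAbove j₁)
        (fun h => hbne j₁ ((congrArg Prod.snd h).symm))).symm
    · exact tri_disj_tri fun h => hne (congrArg Sum.inr (Fin.succAbove_right_injective h))
  have hdisj3 : Pairwise (Function.onFun Disjoint (T3 (KA := KA) (m := m) b)) := by
    intro a₁ a₂ hne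
    exact sing_disj_sing fun h => hne (congrArg (fun x : ιf KA m => x.2.1) h)
  have hdC1 : ∀ (u : Unit) (j : Fin KA ⊕ Fin m), Disjoint (TCc a b u) (T1 a b j) := by
    rintro u (a' | jj)
    · exact sing_disj_sing (by intro h; injection h with h1 _; exact absurd h1 (by decide))
    · exact sing_disj_tri fun h => hbne jj ((congrArg Prod.snd h).symm)
  have hdC23 : ∀ (u : Unit) (j : Fin KA ⊕ (Unit ⊕ Fin m)),
      Disjoint (TCc a b u) (T23 a b j) := by
    rintro u (a' | (u' | jj))
    · exact sing_disj_sing (by intro h; injection h with h1 _; exact absurd h1 (by decide))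
    · exact sing_disj_sing (by intro h; injection h with h1 _; exact absurd h1 (by decide))
    · exact sing_disj_tri fun h => hbne jj ((congrArg Prod.snd h).symm)
  have hd32 : ∀ (j : Fin KA) (k : Unit ⊕ Fin m), Disjoint (T3 (m := m) b j) (T2 a b k) := by
    rintro a' (u | jj)
    · exact sing_disj_sing (by intro h; injection h with h1 _; exact absurd h1 (by decide))
    · exact sing_disj_tri fun h => hbne jj ((congrArg Prod.snd h).symm)
  -- independence and laws of families
  have hm1 : ∀ j, Measurable (V1 a b p f j) := fun j =>
    (hg1 j).comp (measurable_pi_lambda _ fun i => hmeas i.1)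
  have hm2 : ∀ j, Measurable (V2 a b p f j) := fun j =>
    (hg2 j).comp (measurable_pi_lambda _ fun i => hmeas i.1)
  have hm3 : ∀ j, Measurable (V3 (m := m) b f j) := fun j =>
    (hg3 j).comp (measurable_pi_lambda _ fun i => hmeas i.1)
  have hI1 : iIndepFun (V1 a b p f) P :=
    iIndepFun_blocks hindep hmeas (T1 a b) hdisj1 (g1 a b p) hg1 (V1 a b p f)
      (fun j ω => rfl)
  have hI2 : iIndepFun (V2 a b p f) P :=
    iIndepFun_blocks hindep hmeas (T2 a b) hdisj2 (g2 a b p) hg2 (V2 a b p f)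
      (fun j ω => rfl)
  have hI3 : iIndepFun (V3 (m := m) b f) P :=
    iIndepFun_blocks hindep hmeas (T3 b) hdisj3 (g3 b) hg3 (V3 b f) (fun j ω => rfl)
  have hne10 : ∀ c : Fin (m+1), ((1:Fin 3),a,c) ≠ ((0:Fin 3),a,c) := by
    intro c h; injection h with h1 _; exact absurd h1 (by decide)
  have hne12 : ∀ c : Fin (m+1), ((1:Fin 3),a,c) ≠ ((2:Fin 3),a,c) := by
    intro c h; injection h with h1 _; exact absurd h1 (by decide)
  have hlaw1 : ∀ j, P.map (V1 a b p f j) = mu01 := by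
    rintro (a' | jj)
    · exact hunif (0,a',b)
    · exact mixture_law hindep hmeas hunif hp.1 hp.2 (hne10 _) (hne12 _)
  have hlaw2 : ∀ j, P.map (V2 a b p f j) = mu01 := by
    rintro (u | jj)
    · exact hunif (2,a,b)
    · exact mixture_law hindep hmeas hunif hp.1 hp.2 (hne10 _) (hne12 _)
  have hlaw3 : ∀ j, P.map (V3 (m := m) b f j) = mu01 := fun a' => hunif (0,a',b)
  -- the coin event
  set C := {ω | f (1,a,b) ω ≤ p} with hC
  have hCm : MeasurableSet C := measurableSet_le (hmeas _) measurable_const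
  -- target sets
  set SC : Set (Unit → ℝ) := {x | x () ≤ p} with hSC
  have hSCm : MeasurableSet SC := measurableSet_le (measurable_pi_apply _) measurable_const
  set SC' : Set (Unit → ℝ) := {x | p < x ()} with hSC'
  have hSC'm : MeasurableSet SC' := measurableSet_lt measurable_const (measurable_pi_apply _)
  set SM1 : Set ((Fin KA ⊕ Fin m) → ℝ) := {x | ∀ j, x j ≤ x (Sum.inl a)} with hSM1
  have hSM1m : MeasurableSet SM1 := measurableSet_pivot _
  set SCol : Set (Fin KA → ℝ) := {x | ∀ j, x j ≤ x a} with hSCol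
  have hSColm : MeasurableSet SCol := measurableSet_pivot _
  set SRow : Set ((Unit ⊕ Fin m) → ℝ) := {x | ∀ j, x j ≤ x (Sum.inl ())} with hSRow
  have hSRowm : MeasurableSet SRow := measurableSet_pivot _
  set SCR : Set ((Fin KA ⊕ (Unit ⊕ Fin m)) → ℝ) :=
    {x | (∀ a', x (.inl a') ≤ x (.inl a)) ∧ (∀ j2, x (.inr j2) ≤ x (.inr (.inl ())))}
    with hSCR
  have hSCRm : MeasurableSet SCR := by
    have : SCR = {x : (Fin KA ⊕ (Unit ⊕ Fin m)) → ℝ | ∀ a', x (.inl a') ≤ x (.inl a)}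
        ∩ {x | ∀ j2, x (.inr j2) ≤ x (.inr (.inl ()))} := rfl
    rw [this]
    refine MeasurableSet.inter ?_ ?_
    · have : {x : (Fin KA ⊕ (Unit ⊕ Fin m)) → ℝ | ∀ a', x (.inl a') ≤ x (.inl a)}
          = ⋂ a', {x : (Fin KA ⊕ (Unit ⊕ Fin m)) → ℝ | x (.inl a') ≤ x (.inl a)} := by
        ext x; simp
      rw [this]
      exact MeasurableSet.iInter fun a' =>
        measurableSet_le (measurable_pi_apply _) (measurable_pi_apply _)
    · have : {x : (Fin KA ⊕ (Unit ⊕ Fin m)) → ℝ | ∀ j2, x (.inr j2) ≤ x (.inr (.inl ()))}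
          = ⋂ j2, {x : (Fin KA ⊕ (Unit ⊕ Fin m)) → ℝ | x (.inr j2) ≤ x (.inr (.inl ()))} := by
        ext x; simp
      rw [this]
      exact MeasurableSet.iInter fun j2 =>
        measurableSet_le (measurable_pi_apply _) (measurable_pi_apply _)
  -- event decompositions
  have h_heads : E ∩ C = ((fun ω (u : Unit) => VCc a b f u ω) ⁻¹' SC)
      ∩ ((fun ω j => V1 a b p f j ω) ⁻¹' SM1) := by
    ext ω
    constructor
    · rintro ⟨⟨h1, h2⟩, hCω⟩
      have hCp : f (1,a,b) ω ≤ p := hCω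
      refine ⟨hCp, ?_⟩
      rintro (a' | jj)
      · exact h1 a'
      · have h' := h2 (b.succAbove jj)
        rw [if_pos hCp] at h'
        exact h'
    · rintro ⟨hCp, hM⟩
      have hCp' : f (1,a,b) ω ≤ p := hCp
      refine ⟨⟨fun a' => hM (.inl a'), ?_⟩, hCp'⟩
      intro b'
      by_cases hb : b' = b
      · subst hb; exact le_rfl
      · obtain ⟨jj, rfl⟩ := Fin.exists_succAbove_eq hb
        have h' := hM (.inr jj)
        rw [if_pos hCp']
        exact h'
  have h_tails : E ∩ Cᶜ = ((fun ω (u : Unit) => VCc a b f u ω) ⁻¹' SC')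
      ∩ ((fun ω j => V23 a b p f j ω) ⁻¹' SCR) := by
    ext ω
    constructor
    · rintro ⟨⟨h1, h2⟩, hCω⟩
      have hCp : ¬ f (1,a,b) ω ≤ p := hCω
      refine ⟨not_le.1 hCp, ⟨fun a' => h1 a', ?_⟩⟩
      rintro (u | jj)
      · exact le_rfl
      · have h' := h2 (b.succAbove jj)
        rw [if_neg hCp] at h'
        exact h'
    · rintro ⟨hCp, ⟨hcol, hrow⟩⟩
      have hCp' : ¬ f (1,a,b) ω ≤ p := not_le.2 hCp
      refine ⟨⟨fun a' => hcol a', ?_⟩, hCp'⟩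
      intro b'
      by_cases hb : b' = b
      · subst hb; exact le_rfl
      · obtain ⟨jj, rfl⟩ := Fin.exists_succAbove_eq hb
        have h' := hrow (.inr jj)
        rw [if_neg hCp']
        exact h'
  -- measurability of E
  have hGm : ∀ c, Measurable (fun ω => if f (1,a,c) ω ≤ p then f (0,a,c) ω else f (2,a,c) ω) :=
    fun c => Measurable.ite (measurableSet_le (hmeas _) measurable_const) (hmeas _) (hmeas _)
  have hEm : MeasurableSet E := by
    have : E = (⋂ a', {ω | f (0,a',b) ω ≤ f (0,a,b) ω})
        ∩ ⋂ b', {ω | (if f (1,a,b') ω ≤ p then f (0,a,b') ω else f (2,a,b') ω)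
             ≤ (if f (1,a,b) ω ≤ p then f (0,a,b) ω else f (2,a,b) ω)} := by
      ext ω; simp [hE]
    rw [this]
    exact (MeasurableSet.iInter fun a' => measurableSet_le (hmeas _) (hmeas _)).inter
      (MeasurableSet.iInter fun b' => measurableSet_le (hGm b') (hGm b))
  -- probabilities
  have hsplit : P E = P (E ∩ C) + P (E ∩ Cᶜ) := by
    rw [← Set.diff_eq, measure_inter_add_diff E hCm]
  have hPcoin : P ((fun ω (u : Unit) => VCc a b f u ω) ⁻¹' SC) = ENNReal.ofReal p := by
    have : ((fun ω (u : Unit) => VCc a b f u ω) ⁻¹' SC) = f (1,a,b) ⁻¹' Set.Iic p := rfl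
    rw [this, ← Measure.map_apply (hmeas _) measurableSet_Iic, hunif _,
      mu01_Iic hp.1 hp.2]
  have hPcoin' : P ((fun ω (u : Unit) => VCc a b f u ω) ⁻¹' SC')
      = ENNReal.ofReal (1 - p) := by
    have : ((fun ω (u : Unit) => VCc a b f u ω) ⁻¹' SC') = f (1,a,b) ⁻¹' Set.Ioi p := rfl
    rw [this, ← Measure.map_apply (hmeas _) measurableSet_Ioi, hunif _,
      mu01_Ioi hp.1 hp.2]
  have hPM1 : P ((fun ω j => V1 a b p f j ω) ⁻¹' SM1) = ((KA + m : ℕ) : ℝ≥0∞)⁻¹ := by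
    have : ((fun ω j => V1 a b p f j ω) ⁻¹' SM1)
        = {ω | ∀ j, V1 a b p f j ω ≤ V1 a b p f (.inl a) ω} := rfl
    rw [this, max_prob hm1 hI1 hlaw1 (.inl a)]
    congr 1
    simp
  have hPCol : P ((fun ω j => V3 (m := m) b f j ω) ⁻¹' SCol) = ((KA : ℕ) : ℝ≥0∞)⁻¹ := by
    have : ((fun ω j => V3 (m := m) b f j ω) ⁻¹' SCol)
        = {ω | ∀ j, V3 (m := m) b f j ω ≤ V3 (m := m) b f a ω} := rfl
    rw [this, max_prob hm3 hI3 hlaw3 a]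
    congr 1
    simp
  have hPRow : P ((fun ω j => V2 a b p f j ω) ⁻¹' SRow) = ((1 + m : ℕ) : ℝ≥0∞)⁻¹ := by
    have : ((fun ω j => V2 a b p f j ω) ⁻¹' SRow)
        = {ω | ∀ j, V2 a b p f j ω ≤ V2 a b p f (.inl ()) ω} := rfl
    rw [this, max_prob hm2 hI2 hlaw2 (.inl ())]
    congr 1
    simp
  have hPheads : P (E ∩ C) = ENNReal.ofReal p * ((KA + m : ℕ) : ℝ≥0∞)⁻¹ := by
    rw [h_heads,
      indep_two_families hindep hmeas (TCc a b) (T1 a b) hdC1 (gCc a b) hgC (g1 a b p) hg1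
        (VCc a b f) (fun j ω => rfl) (V1 a b p f) (fun j ω => rfl) SC hSCm SM1 hSM1m,
      hPcoin, hPM1]
  have hsplit23 : ((fun ω j => V23 a b p f j ω) ⁻¹' SCR)
      = ((fun ω j => V3 (m := m) b f j ω) ⁻¹' SCol)
        ∩ ((fun ω j => V2 a b p f j ω) ⁻¹' SRow) := rfl
  have hPtails : P (E ∩ Cᶜ)
      = ENNReal.ofReal (1 - p) * (((KA : ℕ) : ℝ≥0∞)⁻¹ * ((1 + m : ℕ) : ℝ≥0∞)⁻¹) := by
    rw [h_tails,
      indep_two_families hindep hmeas (TCc a b) (T23 a b) hdC23 (gCc a b) hgC (g23 a b p) hg23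
        (VCc a b f) (fun j ω => rfl) (V23 a b p f) (fun j ω => rfl) SC' hSC'm SCR hSCRm,
      hPcoin', hsplit23,
      indep_two_families hindep hmeas (T3 b) (T2 a b) hd32 (g3 b) hg3 (g2 a b p) hg2
        (V3 b f) (fun j ω => rfl) (V2 a b p f) (fun j ω => rfl) SCol hSColm SRow hSRowm,
      hPCol, hPRow]
  rw [hsplit, hPheads, hPtails]

/-- In the correlated random game model with parameter `p` (player A's payoffs i.i.d.
uniform on `[0,1]`; per profile, independently, `UB = UA` with probability `p`, else a
fresh independent uniform), the expected number `E[W]` of pure Nash equilibria equals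
`p·KA·KB/(KA + KB - 1) + (1 - p)`. -/
theorem expected_number_PNE
    {Ω : Type*} [MeasurableSpace Ω] (P : Measure Ω) [IsProbabilityMeasure P]
    (KA KB : ℕ) (hKA : 1 ≤ KA) (hKB : 1 ≤ KB) (p : ℝ) (hp : p ∈ Set.Icc (0:ℝ) 1)
    (f : Fin 3 × Fin KA × Fin KB → Ω → ℝ)
    (hmeas : ∀ i, Measurable (f i))
    (hindep : iIndepFun f P)
    (hunif : ∀ i, P.map (f i) = volume.restrict (Set.Icc (0:ℝ) 1))
    (UA UB : Fin KA → Fin KB → Ω → ℝ)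
    (hUA : ∀ a b, UA a b = f (0, a, b))
    (hUB : ∀ a b ω, UB a b ω =
      if f (1, a, b) ω ≤ p then UA a b ω else f (2, a, b) ω)
    (W : Ω → ℕ)
    (hW : ∀ ω, W ω = (Finset.univ.filter (fun ab : Fin KA × Fin KB =>
      (∀ a, UA a ab.2 ω ≤ UA ab.1 ab.2 ω) ∧
      (∀ b, UB ab.1 b ω ≤ UB ab.1 ab.2 ω))).card) :
    ∫ ω, (W ω : ℝ) ∂P = p * KA * KB / (KA + KB - 1) + (1 - p) := by
  classical
  obtain ⟨m, rfl⟩ : ∃ m, KB = m + 1 := ⟨KB - 1, (Nat.succ_pred_eq_of_pos hKB).symm⟩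
  have hμ : ∀ i, P.map (f i) = mu01 := hunif
  set E : Fin KA × Fin (m+1) → Set Ω := fun ab =>
    {ω | (∀ a', f (0,a',ab.2) ω ≤ f (0,ab.1,ab.2) ω) ∧
        (∀ b', (if f (1,ab.1,b') ω ≤ p then f (0,ab.1,b') ω else f (2,ab.1,b') ω)
             ≤ (if f (1,ab.1,ab.2) ω ≤ p then f (0,ab.1,ab.2) ω else f (2,ab.1,ab.2) ω))}
    with hEdef
  have hGm : ∀ (a : Fin KA) (c : Fin (m+1)),
      Measurable (fun ω => if f (1,a,c) ω ≤ p then f (0,a,c) ω else f (2,a,c) ω) :=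
    fun a c => Measurable.ite (measurableSet_le (hmeas _) measurable_const) (hmeas _) (hmeas _)
  have hEm : ∀ ab, MeasurableSet (E ab) := by
    intro ab
    have : E ab = (⋂ a', {ω | f (0,a',ab.2) ω ≤ f (0,ab.1,ab.2) ω})
        ∩ ⋂ b', {ω | (if f (1,ab.1,b') ω ≤ p then f (0,ab.1,b') ω else f (2,ab.1,b') ω)
             ≤ (if f (1,ab.1,ab.2) ω ≤ p then f (0,ab.1,ab.2) ω else f (2,ab.1,ab.2) ω)} := by
      ext ω; simp [hEdef]
    rw [this]
    exact (MeasurableSet.iInter fun _ => measurableSet_le (hmeas _) (hmeas _)).inter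
      (MeasurableSet.iInter fun b' => measurableSet_le (hGm _ _) (hGm _ _))
  have hmem : ∀ ω ab, (ω ∈ E ab) ↔ ((∀ a', UA a' ab.2 ω ≤ UA ab.1 ab.2 ω) ∧
      (∀ b', UB ab.1 b' ω ≤ UB ab.1 ab.2 ω)) := by
    intro ω ab
    simp only [hEdef, Set.mem_setOf_eq, hUB, hUA]
  have hWr : ∀ ω, (W ω : ℝ) = ∑ ab : Fin KA × Fin (m+1),
      Set.indicator (E ab) (fun _ => (1:ℝ)) ω := by
    intro ω
    rw [hW ω, Finset.card_filter]
    push_cast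
    refine Finset.sum_congr rfl fun ab _ => ?_
    rw [Set.indicator_apply]
    by_cases h : ω ∈ E ab
    · rw [if_pos h, if_pos ((hmem ω ab).1 h)]
    · rw [if_neg h, if_neg (fun hc => h ((hmem ω ab).2 hc))]
  have hint : ∀ ab, Integrable (Set.indicator (E ab) (fun _ => (1:ℝ))) P :=
    fun ab => (integrable_const 1).indicator (hEm ab)
  have hq : (ENNReal.ofReal p * ((KA + m : ℕ) : ℝ≥0∞)⁻¹
      + ENNReal.ofReal (1-p) * (((KA : ℕ) : ℝ≥0∞)⁻¹ * (((1 + m : ℕ) : ℝ≥0∞))⁻¹)).toReal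
      = p * ((KA:ℝ) + m)⁻¹ + (1-p) * (((KA:ℝ))⁻¹ * ((1:ℝ) + m)⁻¹) := by
    rw [ENNReal.toReal_add
        (ENNReal.mul_ne_top ENNReal.ofReal_ne_top
          (ENNReal.inv_ne_top.2 (Nat.cast_ne_zero.2 (by omega))))
        (ENNReal.mul_ne_top ENNReal.ofReal_ne_top
          (ENNReal.mul_ne_top
            (ENNReal.inv_ne_top.2 (Nat.cast_ne_zero.2 (by omega)))
            (ENNReal.inv_ne_top.2 (Nat.cast_ne_zero.2 (by omega))))),
      ENNReal.toReal_mul, ENNReal.toReal_mul, ENNReal.toReal_mul,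
      ENNReal.toReal_inv, ENNReal.toReal_inv, ENNReal.toReal_inv,
      ENNReal.toReal_ofReal hp.1, ENNReal.toReal_ofReal (by linarith [hp.2]),
      ENNReal.toReal_natCast, ENNReal.toReal_natCast, ENNReal.toReal_natCast]
    push_cast
    ring
  have key : ∫ ω, (W ω : ℝ) ∂P = (KA * (m+1) : ℕ) *
      (p * ((KA:ℝ) + m)⁻¹ + (1-p) * (((KA:ℝ))⁻¹ * ((1:ℝ) + m)⁻¹)) := by
    calc ∫ ω, (W ω : ℝ) ∂P
        = ∫ ω, (∑ ab : Fin KA × Fin (m+1),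
            Set.indicator (E ab) (fun _ => (1:ℝ)) ω) ∂P := by simp_rw [hWr]
      _ = ∑ ab : Fin KA × Fin (m+1),
            ∫ ω, Set.indicator (E ab) (fun _ => (1:ℝ)) ω ∂P :=
          integral_finset_sum _ (fun ab _ => hint ab)
      _ = ∑ _ab : Fin KA × Fin (m+1),
            (p * ((KA:ℝ) + m)⁻¹ + (1-p) * (((KA:ℝ))⁻¹ * ((1:ℝ) + m)⁻¹)) := by
          refine Finset.sum_congr rfl fun ab _ => ?_
          rw [integral_indicator_const (1:ℝ) (hEm ab), smul_eq_mul, mul_one,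
            measureReal_def, ← hq]
          congr 1
          exact prob_cell P p hp f hmeas hindep hμ ab.1 ab.2
      _ = (KA * (m+1) : ℕ) *
            (p * ((KA:ℝ) + m)⁻¹ + (1-p) * (((KA:ℝ))⁻¹ * ((1:ℝ) + m)⁻¹)) := by
          rw [Finset.sum_const, Finset.card_univ, Fintype.card_prod,
            Fintype.card_fin, Fintype.card_fin, nsmul_eq_mul]
  rw [key]
  have hKA' : (0:ℝ) < (KA:ℝ) := by exact_mod_cast Nat.pos_of_ne_zero (by omega)
  have hm1 : (0:ℝ) < (1:ℝ) + m := by positivity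
  have hKAm : (0:ℝ) < (KA:ℝ) + m := by linarith
  push_cast
  have hcast : (KA:ℝ) + ((m:ℝ) + 1) - 1 = (KA:ℝ) + m := by ring
  rw [hcast]
  field_simp
  ring
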